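/- Under Condition (C), for every θ ∈ [0,2π) the function r ↦ v_θ(r)/p_θ(r) is strictly increasing on (0,ℓ(θ)), and lim_{r↓0} v_θ(r)/p_θ(r) = 0. In particular the limit (v_θ/p_θ)(ℓ(θ)−) := lim_{r↑ℓ(θ)} v_θ(r)/p_θ(r) exists in [0,∞]. -/

import Mathlib

open MeasureTheory Set
open scoped Classical ENNReal

/-- `p′_θ(y) = exp(−2∫₀^y b(z,θ)/s(z,θ)² dz)`, the derivative of the radial scale function. -/
noncomputable def pprime (b s : ℝ → ℝ → ℝ) (θ y : ℝ) : ℝ :=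
  Real.exp (-2 * ∫ z in (0:ℝ)..y, b z θ / (s z θ) ^ 2)

/-- The radial scale function `p_θ(r) = ∫₀^r p′_θ(y) dy`. -/
noncomputable def pscale (b s : ℝ → ℝ → ℝ) (θ r : ℝ) : ℝ :=
  ∫ y in (0:ℝ)..r, pprime b s θ y

/-- Condition (C): `ℓ` is measurable and bounded away from zero, `b` and `s` are Borel
measurable on `Ǐ`, `s` vanishes nowhere on `Ǐ`, `b/s²` and `1/s²` are locally integrable
on `(0,ℓ(θ))` along each ray, and `(1+|b|)/s²` is bounded near the origin. -/
structure CondC (ℓ : ℝ → ℝ≥0∞) (b s : ℝ → ℝ → ℝ) : Prop where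
  meas_ell : Measurable ℓ
  ell_pos : 0 < ⨅ θ ∈ Ico (0:ℝ) (2 * Real.pi), ℓ θ
  meas_b : Measurable
    (Set.restrict {q : ℝ × ℝ | 0 < q.1 ∧ ENNReal.ofReal q.1 < ℓ q.2 ∧
      q.2 ∈ Ico (0:ℝ) (2 * Real.pi)} (fun q => b q.1 q.2))
  meas_s : Measurable
    (Set.restrict {q : ℝ × ℝ | 0 < q.1 ∧ ENNReal.ofReal q.1 < ℓ q.2 ∧
      q.2 ∈ Ico (0:ℝ) (2 * Real.pi)} (fun q => s q.1 q.2))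
  s_ne : ∀ θ ∈ Ico (0:ℝ) (2 * Real.pi), ∀ r : ℝ, 0 < r → ENNReal.ofReal r < ℓ θ →
    s r θ ≠ 0
  loc_int_b : ∀ θ ∈ Ico (0:ℝ) (2 * Real.pi), ∀ r₁ r₂ : ℝ, 0 < r₁ → r₁ ≤ r₂ →
    ENNReal.ofReal r₂ < ℓ θ → IntegrableOn (fun z => b z θ / (s z θ) ^ 2) (Icc r₁ r₂)
  loc_int_s : ∀ θ ∈ Ico (0:ℝ) (2 * Real.pi), ∀ r₁ r₂ : ℝ, 0 < r₁ → r₁ ≤ r₂ →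
    ENNReal.ofReal r₂ < ℓ θ → IntegrableOn (fun z => 1 / (s z θ) ^ 2) (Icc r₁ r₂)
  bound_near_origin : ∃ η : ℝ, 0 < η ∧
    ENNReal.ofReal η < (⨅ θ ∈ Ico (0:ℝ) (2 * Real.pi), ℓ θ) ∧
    ∃ C : ℝ, ∀ θ ∈ Ico (0:ℝ) (2 * Real.pi), ∀ r ∈ Ioc (0:ℝ) η,
      (1 + |b r θ|) / (s r θ) ^ 2 ≤ C

/-- The density `2/(p′_θ(z) s(z,θ)²)` of the speed measure. -/
noncomputable def mdens (b s : ℝ → ℝ → ℝ) (θ z : ℝ) : ℝ :=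
  2 / (pprime b s θ z * (s z θ) ^ 2)

/-- `v′_θ(r) = p′_θ(r) ∫₀^r 2/(p′_θ(z) s(z,θ)²) dz`, the derivative of the Feller
function. -/
noncomputable def vprime (b s : ℝ → ℝ → ℝ) (θ r : ℝ) : ℝ :=
  pprime b s θ r * ∫ z in (0:ℝ)..r, mdens b s θ z

/-- The Feller function `v_θ(r) = ∫₀^r p′_θ(y) (∫₀^y 2/(p′_θ(z) s(z,θ)²) dz) dy`. -/
noncomputable def vfeller (b s : ℝ → ℝ → ℝ) (θ r : ℝ) : ℝ :=
  ∫ y in (0:ℝ)..r, vprime b s θ y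

/-- Integrability up to the origin from local integrability plus a bound near the origin. -/
lemma aux_int_Ioc {f : ℝ → ℝ} {ℓθ : ℝ≥0∞} {η C : ℝ}
    (hint : ∀ r₁ r₂ : ℝ, 0 < r₁ → r₁ ≤ r₂ → ENNReal.ofReal r₂ < ℓθ →
      IntegrableOn f (Icc r₁ r₂))
    (hη : 0 < η) (hηℓ : ENNReal.ofReal η < ℓθ)
    (hbd : ∀ r ∈ Ioc (0:ℝ) η, |f r| ≤ C) :
    ∀ r : ℝ, 0 < r → ENNReal.ofReal r < ℓθ → IntegrableOn f (Ioc 0 r) := by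
  have hU : Ioc (0:ℝ) η = ⋃ n : ℕ, Icc (η / (n + 1)) η := by
    ext x
    simp only [mem_Ioc, mem_iUnion, mem_Icc]
    constructor
    · rintro ⟨hx, hxη⟩
      obtain ⟨n, hn⟩ := exists_nat_ge (η / x)
      refine ⟨n, ?_, hxη⟩
      rw [div_le_iff₀ (by positivity)]
      have h1 : η / x ≤ (n : ℝ) + 1 := hn.trans (by norm_num)
      nlinarith [(div_le_iff₀ hx).mp h1]
    · rintro ⟨n, h1, h2⟩
      exact ⟨lt_of_lt_of_le (by positivity) h1, h2⟩
  have hmono : ∀ n : ℕ, IntegrableOn f (Icc (η / (n + 1)) η) := fun n =>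
    hint _ _ (by positivity) (div_le_self hη.le (by norm_num)) hηℓ
  have hmeas : AEStronglyMeasurable f (volume.restrict (Ioc 0 η)) := by
    rw [hU]
    exact aestronglyMeasurable_iUnion_iff.mpr fun n => (hmono n).aestronglyMeasurable
  have hIη : IntegrableOn f (Ioc 0 η) := by
    refine ⟨hmeas, HasFiniteIntegral.restrict_of_bounded (C := C) measure_Ioc_lt_top ?_⟩
    rw [ae_restrict_iff' measurableSet_Ioc]
    exact MeasureTheory.ae_of_all _ fun x hx => by
      simpa [Real.norm_eq_abs] using hbd x hx
  intro r hr hrℓ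
  rcases le_or_gt r η with hcase | hcase
  · exact hIη.mono_set (Ioc_subset_Ioc le_rfl hcase)
  · have hsplit : Ioc (0:ℝ) r = Ioc 0 η ∪ Ioc η r :=
      (Ioc_union_Ioc_eq_Ioc hη.le hcase.le).symm
    rw [hsplit]
    exact hIη.union ((hint η r hη hcase.le hrℓ).mono_set Ioc_subset_Icc_self)

/-- Under Condition (C), along each ray the ratio `v_θ/p_θ` is strictly increasing on
`(0, ℓ(θ))` and tends to `0` as `r ↓ 0`; in particular it has a (possibly infinite)
limit as `r ↑ ℓ(θ)`. -/
theorem feller_ratio_strictMono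
    (ℓ : ℝ → ℝ≥0∞) (b s : ℝ → ℝ → ℝ) (h : CondC ℓ b s) :
    ∀ θ ∈ Ico (0:ℝ) (2 * Real.pi),
      (∀ r₁ r₂ : ℝ, 0 < r₁ → r₁ < r₂ → ENNReal.ofReal r₂ < ℓ θ →
        vfeller b s θ r₁ / pscale b s θ r₁ < vfeller b s θ r₂ / pscale b s θ r₂) ∧
      Filter.Tendsto (fun r => vfeller b s θ r / pscale b s θ r)
        (nhdsWithin 0 (Ioi 0)) (nhds 0) ∧
      ∃ L : ℝ≥0∞,
        Filter.Tendsto (fun r => ENNReal.ofReal (vfeller b s θ r / pscale b s θ r))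
          (Filter.comap ENNReal.ofReal (nhdsWithin (ℓ θ) (Iio (ℓ θ)))) (nhds L) := by
  intro θ hθ
  obtain ⟨η, hη, hηinf, C, hC⟩ := h.bound_near_origin
  have hinfle : (⨅ θ ∈ Ico (0:ℝ) (2 * Real.pi), ℓ θ) ≤ ℓ θ := iInf₂_le θ hθ
  have hηℓ : ENNReal.ofReal η < ℓ θ := lt_of_lt_of_le hηinf hinfle
  have hℓpos : (0:ℝ≥0∞) < ℓ θ := lt_of_lt_of_le h.ell_pos hinfle
  have hsne : ∀ r ∈ Ioc (0:ℝ) η, s r θ ≠ 0 := fun r hr =>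
    h.s_ne θ hθ r hr.1 (lt_of_le_of_lt (ENNReal.ofReal_le_ofReal hr.2) hηℓ)
  have hs2pos : ∀ r ∈ Ioc (0:ℝ) η, 0 < s r θ ^ 2 := fun r hr =>
    lt_of_le_of_ne (sq_nonneg _) (Ne.symm (pow_ne_zero 2 (hsne r hr)))
  have hCpos : 0 < C := by
    have h1 := hC θ hθ η ⟨hη, le_rfl⟩
    have h2 := hs2pos η ⟨hη, le_rfl⟩
    have h3 : 0 < (1 + |b η θ|) / (s η θ) ^ 2 := by positivity
    linarith
  have hbb : ∀ r ∈ Ioc (0:ℝ) η, |b r θ / s r θ ^ 2| ≤ C := by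
    intro r hr
    have hs2 := hs2pos r hr
    rw [abs_div, abs_of_nonneg (sq_nonneg (s r θ))]
    calc |b r θ| / s r θ ^ 2 ≤ (1 + |b r θ|) / s r θ ^ 2 := by gcongr; linarith
      _ ≤ C := hC θ hθ r hr
  have hss : ∀ r ∈ Ioc (0:ℝ) η, |1 / s r θ ^ 2| ≤ C := by
    intro r hr
    have hs2 := hs2pos r hr
    rw [abs_of_nonneg (by positivity : (0:ℝ) ≤ 1 / s r θ ^ 2)]
    calc 1 / s r θ ^ 2 ≤ (1 + |b r θ|) / s r θ ^ 2 := by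
          gcongr
          exact le_add_of_nonneg_right (abs_nonneg _)
      _ ≤ C := hC θ hθ r hr
  have hbInt : ∀ r : ℝ, 0 < r → ENNReal.ofReal r < ℓ θ →
      IntegrableOn (fun z => b z θ / s z θ ^ 2) (Ioc 0 r) :=
    aux_int_Ioc (h.loc_int_b θ hθ) hη hηℓ hbb
  have hsInt : ∀ r : ℝ, 0 < r → ENNReal.ofReal r < ℓ θ →
      IntegrableOn (fun z => 1 / s z θ ^ 2) (Ioc 0 r) :=
    aux_int_Ioc (h.loc_int_s θ hθ) hη hηℓ hss
  have hppos : ∀ y : ℝ, 0 < pprime b s θ y := fun y => Real.exp_pos _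
  have hmnonneg : ∀ z : ℝ, 0 ≤ mdens b s θ z := fun z =>
    div_nonneg (by norm_num) (mul_nonneg (hppos z).le (sq_nonneg _))
  -- continuity of p' on [0,R]
  have hp'cont : ∀ R : ℝ, 0 < R → ENNReal.ofReal R < ℓ θ →
      ContinuousOn (pprime b s θ) (Icc 0 R) := by
    intro R hR hRℓ
    have hint : IntervalIntegrable (fun z => b z θ / s z θ ^ 2) volume 0 R :=
      (intervalIntegrable_iff_integrableOn_Ioc_of_le hR.le).mpr (hbInt R hR hRℓ)
    have hF : ContinuousOn (fun y => ∫ z in (0:ℝ)..y, b z θ / s z θ ^ 2) (Icc 0 R) := by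
      have := intervalIntegral.continuousOn_primitive_interval' hint
        (by rw [uIcc_of_le hR.le]; exact left_mem_Icc.mpr hR.le)
      rwa [uIcc_of_le hR.le] at this
    exact Real.continuous_exp.comp_continuousOn (continuousOn_const.mul hF)
  -- integrability of mdens
  have hmeq : mdens b s θ = fun z => (2 * (pprime b s θ z)⁻¹) * (1 / s z θ ^ 2) := by
    funext z
    rw [mdens, div_eq_mul_inv, mul_inv, one_div]
    ring
  have hmInt : ∀ R : ℝ, 0 < R → ENNReal.ofReal R < ℓ θ →
      IntegrableOn (mdens b s θ) (Ioc 0 R) := by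
    intro R hR hRℓ
    rw [hmeq, ← integrableOn_Icc_iff_integrableOn_Ioc]
    refine IntegrableOn.continuousOn_mul ?_ ?_ isCompact_Icc
    · exact continuousOn_const.mul ((hp'cont R hR hRℓ).inv₀ fun x _ => (hppos x).ne')
    · exact (integrableOn_Icc_iff_integrableOn_Ioc).mpr (hsInt R hR hRℓ)
  have hmII : ∀ R : ℝ, 0 < R → ENNReal.ofReal R < ℓ θ → ∀ a c : ℝ,
      a ∈ Icc (0:ℝ) R → c ∈ Icc (0:ℝ) R →
      IntervalIntegrable (mdens b s θ) volume a c := by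
    intro R hR hRℓ a c ha hc
    rw [intervalIntegrable_iff]
    exact (hmInt R hR hRℓ).mono_set
      (Ioc_subset_Ioc (le_inf ha.1 hc.1) (sup_le ha.2 hc.2))
  have hpII : ∀ R : ℝ, 0 < R → ENNReal.ofReal R < ℓ θ → ∀ a c : ℝ,
      a ∈ Icc (0:ℝ) R → c ∈ Icc (0:ℝ) R →
      IntervalIntegrable (pprime b s θ) volume a c := by
    intro R hR hRℓ a c ha hc
    exact ((hp'cont R hR hRℓ).mono (uIcc_subset_Icc ha hc)).intervalIntegrable
  -- continuity of M on [0,R]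
  have hMcont : ∀ R : ℝ, 0 < R → ENNReal.ofReal R < ℓ θ →
      ContinuousOn (fun y => ∫ z in (0:ℝ)..y, mdens b s θ z) (Icc 0 R) := by
    intro R hR hRℓ
    have hint : IntervalIntegrable (mdens b s θ) volume 0 R :=
      (intervalIntegrable_iff_integrableOn_Ioc_of_le hR.le).mpr (hmInt R hR hRℓ)
    have := intervalIntegral.continuousOn_primitive_interval' hint
      (by rw [uIcc_of_le hR.le]; exact left_mem_Icc.mpr hR.le)
    rwa [uIcc_of_le hR.le] at this
  have hvII : ∀ R : ℝ, 0 < R → ENNReal.ofReal R < ℓ θ → ∀ a c : ℝ,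
      a ∈ Icc (0:ℝ) R → c ∈ Icc (0:ℝ) R →
      IntervalIntegrable (vprime b s θ) volume a c := by
    intro R hR hRℓ a c ha hc
    have : ContinuousOn (vprime b s θ) (Icc 0 R) :=
      (hp'cont R hR hRℓ).mul (hMcont R hR hRℓ)
    exact (this.mono (uIcc_subset_Icc ha hc)).intervalIntegrable
  -- monotonicity and positivity of M
  have hmpos : ∀ z : ℝ, 0 < z → ENNReal.ofReal z < ℓ θ → 0 < mdens b s θ z := by
    intro z hz hzℓ
    have hs := h.s_ne θ hθ z hz hzℓ
    have hs2 : 0 < s z θ ^ 2 := lt_of_le_of_ne (sq_nonneg _) (Ne.symm (pow_ne_zero 2 hs))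
    exact div_pos (by norm_num) (mul_pos (hppos z) hs2)
  have hMmono : ∀ R : ℝ, 0 < R → ENNReal.ofReal R < ℓ θ → ∀ a c : ℝ,
      0 ≤ a → a ≤ c → c ≤ R →
      (∫ z in (0:ℝ)..a, mdens b s θ z) ≤ ∫ z in (0:ℝ)..c, mdens b s θ z := by
    intro R hR hRℓ a c ha hac hcR
    have hsum := intervalIntegral.integral_add_adjacent_intervals
      (hmII R hR hRℓ 0 a ⟨le_rfl, hR.le⟩ ⟨ha, hac.trans hcR⟩)
      (hmII R hR hRℓ a c ⟨ha, hac.trans hcR⟩ ⟨ha.trans hac, hcR⟩)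
    have hnn : 0 ≤ ∫ z in a..c, mdens b s θ z :=
      intervalIntegral.integral_nonneg hac fun u _ => hmnonneg u
    linarith
  have hMlt : ∀ R : ℝ, 0 < R → ENNReal.ofReal R < ℓ θ → ∀ a c : ℝ,
      0 ≤ a → a < c → c ≤ R →
      (∫ z in (0:ℝ)..a, mdens b s θ z) < ∫ z in (0:ℝ)..c, mdens b s θ z := by
    intro R hR hRℓ a c ha hac hcR
    have hsum := intervalIntegral.integral_add_adjacent_intervals
      (hmII R hR hRℓ 0 a ⟨le_rfl, hR.le⟩ ⟨ha, hac.le.trans hcR⟩)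
      (hmII R hR hRℓ a c ⟨ha, hac.le.trans hcR⟩ ⟨ha.trans hac.le, hcR⟩)
    have hpos : 0 < ∫ z in a..c, mdens b s θ z := by
      apply intervalIntegral.intervalIntegral_pos_of_pos_on
        (hmII R hR hRℓ a c ⟨ha, hac.le.trans hcR⟩ ⟨ha.trans hac.le, hcR⟩)
      · intro x hx
        exact hmpos x (lt_of_le_of_lt ha hx.1)
          (lt_of_le_of_lt (ENNReal.ofReal_le_ofReal (hx.2.le.trans hcR)) hRℓ)
      · exact hac
    linarith
  -- positivity of pscale
  have hpspos : ∀ r : ℝ, 0 < r → ENNReal.ofReal r < ℓ θ → 0 < pscale b s θ r := by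
    intro r hr hrℓ
    exact intervalIntegral.intervalIntegral_pos_of_pos
      (hpII r hr hrℓ 0 r ⟨le_rfl, hr.le⟩ ⟨hr.le, le_rfl⟩) hppos hr
  -- v r < M r * p r  (strict), and v r ≤ M r * p r, and v r > 0
  have hMpos : ∀ r : ℝ, 0 < r → ENNReal.ofReal r < ℓ θ →
      0 < ∫ z in (0:ℝ)..r, mdens b s θ z := by
    intro r hr hrℓ
    have := hMlt r hr hrℓ 0 r le_rfl hr le_rfl
    simpa using this
  have hvpos : ∀ r : ℝ, 0 < r → ENNReal.ofReal r < ℓ θ → 0 < vfeller b s θ r := by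
    intro r hr hrℓ
    rw [vfeller]
    apply intervalIntegral.intervalIntegral_pos_of_pos_on (hvII r hr hrℓ 0 r ⟨le_rfl, hr.le⟩ ⟨hr.le, le_rfl⟩)
    · intro x hx
      have h1 := hppos x
      have h2 : 0 < ∫ z in (0:ℝ)..x, mdens b s θ z := by
        have := hMlt r hr hrℓ 0 x le_rfl hx.1 hx.2.le
        simpa using this
      rw [vprime]
      positivity
    · exact hr
  have hkey : ∀ r : ℝ, 0 < r → ENNReal.ofReal r < ℓ θ →
      vfeller b s θ r < (∫ z in (0:ℝ)..r, mdens b s θ z) * pscale b s θ r := by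
    intro r hr hrℓ
    set Mr := ∫ z in (0:ℝ)..r, mdens b s θ z with hMr
    have hIv := hvII r hr hrℓ 0 r ⟨le_rfl, hr.le⟩ ⟨hr.le, le_rfl⟩
    have hIp := (hpII r hr hrℓ 0 r ⟨le_rfl, hr.le⟩ ⟨hr.le, le_rfl⟩).const_mul Mr
    have hdiff : Mr * pscale b s θ r - vfeller b s θ r
        = ∫ y in (0:ℝ)..r, (Mr * pprime b s θ y - vprime b s θ y) := by
      rw [intervalIntegral.integral_sub hIp hIv, intervalIntegral.integral_const_mul,
        pscale, vfeller]
    have hpos : 0 < ∫ y in (0:ℝ)..r, (Mr * pprime b s θ y - vprime b s θ y) := by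
      apply intervalIntegral.intervalIntegral_pos_of_pos_on (hIp.sub hIv)
      · intro x hx
        have h1 := hppos x
        have h2 : (∫ z in (0:ℝ)..x, mdens b s θ z) < Mr :=
          hMlt r hr hrℓ x r hx.1.le hx.2 le_rfl
        rw [vprime]
        nlinarith
      · exact hr
    linarith
  have hkey' : ∀ r : ℝ, 0 < r → ENNReal.ofReal r < ℓ θ →
      vfeller b s θ r ≤ (∫ z in (0:ℝ)..r, mdens b s θ z) * pscale b s θ r :=
    fun r hr hrℓ => (hkey r hr hrℓ).le
  -- PART 1 : strict monotonicity of the ratio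
  have part1 : ∀ r₁ r₂ : ℝ, 0 < r₁ → r₁ < r₂ → ENNReal.ofReal r₂ < ℓ θ →
      vfeller b s θ r₁ / pscale b s θ r₁ < vfeller b s θ r₂ / pscale b s θ r₂ := by
    intro r₁ r₂ h1 h12 h2ℓ
    have h1ℓ : ENNReal.ofReal r₁ < ℓ θ :=
      lt_of_le_of_lt (ENNReal.ofReal_le_ofReal h12.le) h2ℓ
    have h2 : 0 < r₂ := h1.trans h12
    set M1 := ∫ z in (0:ℝ)..r₁, mdens b s θ z with hM1
    have hIp01 := hpII r₂ h2 h2ℓ 0 r₁ ⟨le_rfl, h2.le⟩ ⟨h1.le, h12.le⟩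
    have hIp12 := hpII r₂ h2 h2ℓ r₁ r₂ ⟨h1.le, h12.le⟩ ⟨h2.le, le_rfl⟩
    have hIv01 := hvII r₂ h2 h2ℓ 0 r₁ ⟨le_rfl, h2.le⟩ ⟨h1.le, h12.le⟩
    have hIv12 := hvII r₂ h2 h2ℓ r₁ r₂ ⟨h1.le, h12.le⟩ ⟨h2.le, le_rfl⟩
    have hv2 := intervalIntegral.integral_add_adjacent_intervals hIv01 hIv12
    have hp2 := intervalIntegral.integral_add_adjacent_intervals hIp01 hIp12
    -- hv2 : vfeller r₁ + ∫ r₁..r₂ vprime = vfeller r₂ (as integrals)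
    have hB : 0 < ∫ y in r₁..r₂, pprime b s θ y :=
      intervalIntegral.intervalIntegral_pos_of_pos hIp12 hppos h12
    have hA : M1 * (∫ y in r₁..r₂, pprime b s θ y) ≤ ∫ y in r₁..r₂, vprime b s θ y := by
      rw [← intervalIntegral.integral_const_mul]
      apply intervalIntegral.integral_mono_on h12.le (hIp12.const_mul M1) hIv12
      intro y hy
      have h1' := hppos y
      have h2' : M1 ≤ ∫ z in (0:ℝ)..y, mdens b s θ z :=
        hMmono r₂ h2 h2ℓ r₁ y h1.le hy.1 hy.2
      rw [vprime]
      nlinarith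
    have hk := hkey r₁ h1 h1ℓ
    have hp1pos := hpspos r₁ h1 h1ℓ
    have hp2pos := hpspos r₂ h2 h2ℓ
    have hv1pos := hvpos r₁ h1 h1ℓ
    rw [div_lt_div_iff₀ hp1pos hp2pos]
    have e1 : vfeller b s θ r₂ = vfeller b s θ r₁ + ∫ y in r₁..r₂, vprime b s θ y := by
      rw [vfeller, vfeller, ← hv2]
    have e2 : pscale b s θ r₂ = pscale b s θ r₁ + ∫ y in r₁..r₂, pprime b s θ y := by
      rw [pscale, pscale, ← hp2]
    rw [e1, e2]
    nlinarith [mul_lt_mul_of_pos_right hk hB,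
      mul_le_mul_of_nonneg_right hA hp1pos.le]
  -- PART 2 : limit 0 at the origin
  have part2 : Filter.Tendsto (fun r => vfeller b s θ r / pscale b s θ r)
      (nhdsWithin 0 (Ioi 0)) (nhds 0) := by
    set ε := Real.exp (-(2 * C * η)) with hε
    have hεpos : 0 < ε := Real.exp_pos _
    set K := 2 * ε⁻¹ * C with hK
    have hKpos : 0 < K := by positivity
    -- bound on mdens on (0, η]
    have hmbd : ∀ z ∈ Ioc (0:ℝ) η, mdens b s θ z ≤ K := by
      intro z hz
      have hFz : |∫ u in (0:ℝ)..z, b u θ / s u θ ^ 2| ≤ C * z := by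
        have := intervalIntegral.norm_integral_le_of_norm_le_const
          (f := fun u => b u θ / s u θ ^ 2) (a := 0) (b := z) (C := C) ?_
        · rwa [Real.norm_eq_abs, sub_zero, abs_of_pos hz.1] at this
        · intro x hx
          rw [uIoc_of_le hz.1.le] at hx
          exact (Real.norm_eq_abs _) ▸ hbb x ⟨hx.1, hx.2.trans hz.2⟩
      have hFle : (∫ u in (0:ℝ)..z, b u θ / s u θ ^ 2) ≤ C * η := by
        have h1 := (abs_le.mp hFz).2
        nlinarith [hz.2, hCpos]
      have hp'ge : ε ≤ pprime b s θ z := by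
        rw [pprime, hε]
        apply Real.exp_le_exp.mpr
        linarith
      have hinv : (pprime b s θ z)⁻¹ ≤ ε⁻¹ := by
        apply inv_anti₀ hεpos hp'ge
      have hs2 : |1 / s z θ ^ 2| ≤ C := hss z hz
      have hs2' : 1 / s z θ ^ 2 ≤ C := (abs_le.mp hs2).2
      have hs2nn : (0:ℝ) ≤ 1 / s z θ ^ 2 := by positivity
      calc mdens b s θ z = 2 * (pprime b s θ z)⁻¹ * (1 / s z θ ^ 2) := by rw [hmeq]
        _ ≤ 2 * ε⁻¹ * C := by
            apply mul_le_mul _ hs2' hs2nn (by positivity)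
            linarith
        _ = K := rfl
    -- bound M r ≤ K r on (0, η]
    have hMbd : ∀ r ∈ Ioc (0:ℝ) η, (∫ z in (0:ℝ)..r, mdens b s θ z) ≤ K * r := by
      intro r hr
      have hne : ∀ᵐ x : ℝ, x ≠ (0:ℝ) := by
        rw [MeasureTheory.ae_iff]
        simp only [ne_eq, not_not]
        have : {a : ℝ | a = 0} = {(0:ℝ)} := by ext x; simp
        rw [this]
        exact measure_singleton 0
      have hbound : (fun z => mdens b s θ z) ≤ᵐ[volume.restrict (Icc (0:ℝ) r)]
          fun _ => K := by
        filter_upwards [ae_restrict_mem measurableSet_Icc,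
          hne.filter_mono (MeasureTheory.ae_mono Measure.restrict_le_self)] with x hx hx0
        exact hmbd x ⟨lt_of_le_of_ne hx.1 (Ne.symm hx0), hx.2.trans hr.2⟩
      have h2 := intervalIntegral.integral_mono_ae_restrict hr.1.le
        (hmII η hη hηℓ 0 r ⟨le_rfl, hη.le⟩ ⟨hr.1.le, hr.2⟩)
        (intervalIntegrable_const (c := K)) hbound
      rw [intervalIntegral.integral_const, smul_eq_mul, sub_zero, mul_comm r K] at h2
      exact h2
    -- squeeze
    have hub : ∀ r ∈ Ioc (0:ℝ) η, vfeller b s θ r / pscale b s θ r ≤ K * r := by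
      intro r hr
      have hrℓ : ENNReal.ofReal r < ℓ θ :=
        lt_of_le_of_lt (ENNReal.ofReal_le_ofReal hr.2) hηℓ
      have hp := hpspos r hr.1 hrℓ
      have hv := hkey' r hr.1 hrℓ
      have hM := hMbd r hr
      rw [div_le_iff₀ hp]
      nlinarith
    have hlb : ∀ r ∈ Ioc (0:ℝ) η, 0 ≤ vfeller b s θ r / pscale b s θ r := by
      intro r hr
      have hrℓ : ENNReal.ofReal r < ℓ θ :=
        lt_of_le_of_lt (ENNReal.ofReal_le_ofReal hr.2) hηℓ
      exact div_nonneg (hvpos r hr.1 hrℓ).le (hpspos r hr.1 hrℓ).le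
    have hmem : Ioc (0:ℝ) η ∈ nhdsWithin (0:ℝ) (Ioi 0) := Ioc_mem_nhdsGT hη
    have hg : Filter.Tendsto (fun r : ℝ => K * r) (nhdsWithin 0 (Ioi 0)) (nhds 0) := by
      have : Filter.Tendsto (fun r : ℝ => K * r) (nhds 0) (nhds (K * 0)) :=
        (continuous_const.mul continuous_id).tendsto 0
      rw [mul_zero] at this
      exact this.mono_left nhdsWithin_le_nhds
    apply tendsto_of_tendsto_of_tendsto_of_le_of_le' tendsto_const_nhds hg
    · exact Filter.eventually_of_mem hmem hlb
    · exact Filter.eventually_of_mem hmem hub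
  refine ⟨part1, part2, ?_⟩
  -- PART 3 : existence of the limit at ℓ θ
  have hmono : ∀ r₁ r₂ : ℝ, 0 < r₁ → r₁ ≤ r₂ → ENNReal.ofReal r₂ < ℓ θ →
      vfeller b s θ r₁ / pscale b s θ r₁ ≤ vfeller b s θ r₂ / pscale b s θ r₂ := by
    intro r₁ r₂ h1 h12 h2ℓ
    rcases eq_or_lt_of_le h12 with rfl | hlt
    · exact le_rfl
    · exact (part1 r₁ r₂ h1 hlt h2ℓ).le
  rcases eq_or_ne (ℓ θ) ∞ with hfin | hfin
  · -- ℓ θ = ∞ : use atTop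
    set g : ℝ → ℝ≥0∞ := fun r => ENNReal.ofReal
      (vfeller b s θ (max r 1) / pscale b s θ (max r 1)) with hg
    have hgmono : Monotone g := by
      intro a a' haa'
      apply ENNReal.ofReal_le_ofReal
      apply hmono
      · exact lt_of_lt_of_le one_pos (le_max_right a 1)
      · exact max_le_max haa' le_rfl
      · rw [hfin]; exact ENNReal.ofReal_lt_top
    have hgt : Filter.Tendsto g Filter.atTop (nhds (⨆ r, g r)) := tendsto_atTop_iSup hgmono
    have heq : g =ᶠ[Filter.atTop] fun r =>
        ENNReal.ofReal (vfeller b s θ r / pscale b s θ r) := by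
      filter_upwards [Filter.eventually_ge_atTop (1:ℝ)] with r hr
      rw [hg]
      simp only [max_eq_left hr]
    have hft : Filter.Tendsto (fun r => ENNReal.ofReal (vfeller b s θ r / pscale b s θ r))
        Filter.atTop (nhds (⨆ r, g r)) := hgt.congr' heq
    have hle : Filter.comap ENNReal.ofReal (nhdsWithin (ℓ θ) (Iio (ℓ θ))) ≤ Filter.atTop := by
      intro S hS
      obtain ⟨c, hc⟩ := Filter.mem_atTop_sets.mp hS
      rw [Filter.mem_comap]
      refine ⟨Ioi (ENNReal.ofReal c), ?_, ?_⟩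
      · apply mem_nhdsWithin_of_mem_nhds
        rw [hfin]
        exact Ioi_mem_nhds ENNReal.ofReal_lt_top
      · intro r hr
        apply hc
        by_contra hcon
        push_neg at hcon
        exact absurd (ENNReal.ofReal_le_ofReal hcon.le) (not_le.mpr hr)
    exact ⟨⨆ r, g r, hft.mono_left hle⟩
  · -- ℓ θ < ∞
    set t := (ℓ θ).toReal with ht
    have htpos : 0 < t := ENNReal.toReal_pos hℓpos.ne' hfin
    have hoft : ENNReal.ofReal t = ℓ θ := ENNReal.ofReal_toReal hfin
    have hmonoOn : MonotoneOn
        (fun r => ENNReal.ofReal (vfeller b s θ r / pscale b s θ r)) (Ioo 0 t) := by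
      intro r₁ hr₁ r₂ hr₂ h12
      apply ENNReal.ofReal_le_ofReal
      apply hmono r₁ r₂ hr₁.1 h12
      rw [← hoft]
      exact (ENNReal.ofReal_lt_ofReal_iff htpos).mpr hr₂.2
    have hne : (Ioo (0:ℝ) t).Nonempty := ⟨t / 2, by constructor <;> linarith⟩
    have hbdd : BddAbove ((fun r => ENNReal.ofReal (vfeller b s θ r / pscale b s θ r)) ''
        Ioo 0 t) := OrderTop.bddAbove _
    have htend := MonotoneOn.tendsto_nhdsWithin_Ioo_left hne hmonoOn hbdd
    have hle : Filter.comap ENNReal.ofReal (nhdsWithin (ℓ θ) (Iio (ℓ θ)))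
        ≤ nhdsWithin t (Iio t) := by
      intro S hS
      obtain ⟨c, hc, hsub⟩ := mem_nhdsLT_iff_exists_Ioo_subset.mp hS
      rw [Filter.mem_comap]
      set c' := max c 0 with hc'
      have hc't : c' < t := max_lt hc htpos
      refine ⟨Ioo (ENNReal.ofReal c') (ℓ θ), ?_, ?_⟩
      · apply Ioo_mem_nhdsLT
        rw [← hoft]
        exact (ENNReal.ofReal_lt_ofReal_iff htpos).mpr hc't
      · intro r hr
        simp only [mem_preimage, mem_Ioo] at hr
        apply hsub
        constructor
        · have : c' < r := by
            by_contra hcon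
            push_neg at hcon
            exact absurd (ENNReal.ofReal_le_ofReal hcon) (not_le.mpr hr.1)
          exact lt_of_le_of_lt (le_max_left c 0) this
        · by_contra hcon
          push_neg at hcon
          rw [← hoft] at hr
          exact absurd (ENNReal.ofReal_le_ofReal hcon) (not_le.mpr hr.2)
    exact ⟨_, htend.mono_left hle⟩
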